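/- Define h : ℝ_{>0} → ℝ by h(r) = ½ Λ*(L + Lᵀ)·(−(r⁴ + 3r² + 2)/r + √(((r⁴ + 3r² + 2)/r)² − 4)) + K r²/(1 + r²), where Λ*(L + Lᵀ) > 0 is the smallest nonzero eigenvalue of L + Lᵀ and K > 0. Then there exists β* > 0 with h(β*) = 0, h(r) < 0 for all sufficiently small r > 0, and lim_{r→∞} h(r) = K > 0. -/
import Mathlib


open Matrix BigOperators Filter

lemma aux_sqrt_upper (f : ℝ) (hf : 2 ≤ f) : Real.sqrt (f ^ 2 - 4) ≤ f - 2 / f := by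
  have hf0 : (0:ℝ) < f := by linarith
  have h2 : 2 / f ≤ 1 := by rw [div_le_one hf0]; linarith
  have hnn : 0 ≤ f - 2 / f := by linarith
  have key : (f - 2 / f) ^ 2 = f ^ 2 - 4 + (2 / f) ^ 2 := by field_simp; ring
  have h1 : f ^ 2 - 4 ≤ (f - 2 / f) ^ 2 := by nlinarith [sq_nonneg (2 / f)]
  calc Real.sqrt (f ^ 2 - 4) ≤ Real.sqrt ((f - 2 / f) ^ 2) := Real.sqrt_le_sqrt h1
    _ = f - 2 / f := Real.sqrt_sq hnn

lemma aux_sqrt_lower (f : ℝ) (hf : 2 ≤ f) : f - 4 / f ≤ Real.sqrt (f ^ 2 - 4) := by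
  have hf0 : (0:ℝ) < f := by linarith
  rcases le_or_gt (f - 4 / f) 0 with hc | hc
  · exact hc.trans (Real.sqrt_nonneg _)
  · rw [Real.le_sqrt hc.le (by nlinarith)]
    have key : (f - 4 / f) ^ 2 = f ^ 2 - 8 + (4 / f) ^ 2 := by field_simp; ring
    have h4 : 4 / f ≤ 2 := by rw [div_le_iff₀ hf0]; linarith
    have h40 : 0 ≤ 4 / f := by positivity
    nlinarith

lemma aux_f_ge_two (r : ℝ) (hr : 0 < r) : 2 ≤ (r ^ 4 + 3 * r ^ 2 + 2) / r := by
  rw [le_div_iff₀ hr]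
  nlinarith [sq_nonneg (r - 1), sq_nonneg r, sq_nonneg (r ^ 2)]

lemma aux_h_neg (Λ K : ℝ) (hΛpos : 0 < Λ) (hK : 0 < K) (r : ℝ) (hr : 0 < r)
    (hr1 : r ≤ 1) (hrK : r < Λ / (6 * K)) :
    (1 / 2) * Λ * (-((r ^ 4 + 3 * r ^ 2 + 2) / r) +
      Real.sqrt (((r ^ 4 + 3 * r ^ 2 + 2) / r) ^ 2 - 4)) + K * r ^ 2 / (1 + r ^ 2) < 0 := by
  set f : ℝ := (r ^ 4 + 3 * r ^ 2 + 2) / r with hfd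
  have hf2 : 2 ≤ f := aux_f_ge_two r hr
  have hf0 : (0:ℝ) < f := by linarith
  have hsu := aux_sqrt_upper f hf2
  have hterm1 : (1 / 2) * Λ * (-f + Real.sqrt (f ^ 2 - 4)) ≤ -(Λ / f) := by
    have h1 : -f + Real.sqrt (f ^ 2 - 4) ≤ -(2 / f) := by linarith
    calc (1 / 2) * Λ * (-f + Real.sqrt (f ^ 2 - 4)) ≤ (1 / 2) * Λ * (-(2 / f)) := by
          apply mul_le_mul_of_nonneg_left h1 (by positivity)
      _ = -(Λ / f) := by ring
  have hterm2 : K * r ^ 2 / (1 + r ^ 2) ≤ K * r ^ 2 := by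
    apply div_le_self (by positivity) (by nlinarith)
  have hfle : f ≤ 6 / r := by
    rw [hfd, div_le_div_iff₀ hr hr]
    have h2 : r ^ 2 ≤ 1 := by nlinarith
    have h4 : r ^ 4 ≤ 1 := by nlinarith
    nlinarith
  have hΛf : Λ * r / 6 ≤ Λ / f := by
    have h1 : Λ / (6 / r) ≤ Λ / f := by
      apply div_le_div_of_nonneg_left hΛpos.le hf0 hfle
    have h2 : Λ / (6 / r) = Λ * r / 6 := by
      rw [div_div_eq_mul_div]
    linarith
  have hKr : K * r ^ 2 < Λ * r / 6 := by
    have h6 : r * (6 * K) < Λ := by rwa [lt_div_iff₀ (by positivity)] at hrK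
    nlinarith [mul_lt_mul_of_pos_right h6 hr]
  linarith

theorem h_has_positive_root
    {n : ℕ}
    (A : Matrix (Fin n) (Fin n) ℝ)
    (hA : ∀ i j, 0 ≤ A i j)
    (hconn : ∀ i j : Fin n, i ≠ j → Relation.TransGen (fun a b => 0 < A a b) i j)
    (hbal : ∀ i, ∑ j, A i j = ∑ j, A j i)
    (L : Matrix (Fin n) (Fin n) ℝ)
    (hL : L = Matrix.diagonal (fun i => ∑ j, A i j) - A)
    (Λ : ℝ) (hΛpos : 0 < Λ)
    (hΛeig : ∃ v : Fin n → ℝ, v ≠ 0 ∧ (L + Lᵀ) *ᵥ v = Λ • v)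
    (hΛmin : ∀ (μ : ℝ) (v : Fin n → ℝ), v ≠ 0 → (L + Lᵀ) *ᵥ v = μ • v → μ ≠ 0 → Λ ≤ |μ|)
    (K : ℝ) (hK : 0 < K)
    (h : ℝ → ℝ)
    (hh : h = fun r => (1 / 2) * Λ *
        (-((r ^ 4 + 3 * r ^ 2 + 2) / r) +
          Real.sqrt (((r ^ 4 + 3 * r ^ 2 + 2) / r) ^ 2 - 4)) +
        K * r ^ 2 / (1 + r ^ 2)) :
    (∃ βs : ℝ, 0 < βs ∧ h βs = 0) ∧
    (∃ ε > 0, ∀ r : ℝ, 0 < r → r < ε → h r < 0) ∧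
    Tendsto h atTop (nhds K) := by
  subst hh
  -- negativity for small r
  have hεpos : 0 < min 1 (Λ / (6 * K)) := lt_min one_pos (by positivity)
  have hneg : ∀ r : ℝ, 0 < r → r < min 1 (Λ / (6 * K)) →
      (1 / 2) * Λ * (-((r ^ 4 + 3 * r ^ 2 + 2) / r) +
        Real.sqrt (((r ^ 4 + 3 * r ^ 2 + 2) / r) ^ 2 - 4)) + K * r ^ 2 / (1 + r ^ 2) < 0 := by
    intro r hr hrε
    exact aux_h_neg Λ K hΛpos hK r hr (le_of_lt (lt_of_lt_of_le hrε (min_le_left _ _)))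
      (lt_of_lt_of_le hrε (min_le_right _ _))
  -- upper bound h r ≤ K for r ≥ 1
  have hub : ∀ r : ℝ, 1 ≤ r →
      (1 / 2) * Λ * (-((r ^ 4 + 3 * r ^ 2 + 2) / r) +
        Real.sqrt (((r ^ 4 + 3 * r ^ 2 + 2) / r) ^ 2 - 4)) + K * r ^ 2 / (1 + r ^ 2) ≤ K := by
    intro r hr1
    have hr : (0:ℝ) < r := by linarith
    set f : ℝ := (r ^ 4 + 3 * r ^ 2 + 2) / r with hfd
    have hf2 : 2 ≤ f := aux_f_ge_two r hr
    have hs : Real.sqrt (f ^ 2 - 4) ≤ f := by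
      calc Real.sqrt (f ^ 2 - 4) ≤ Real.sqrt (f ^ 2) := Real.sqrt_le_sqrt (by nlinarith)
        _ = f := Real.sqrt_sq (by linarith)
    have ht1 : (1 / 2) * Λ * (-f + Real.sqrt (f ^ 2 - 4)) ≤ 0 := by
      apply mul_nonpos_of_nonneg_of_nonpos (by positivity)
      linarith
    have ht2 : K * r ^ 2 / (1 + r ^ 2) ≤ K := by
      rw [div_le_iff₀ (by positivity)]
      nlinarith
    linarith
  -- lower bound for r ≥ 1
  have hlb : ∀ r : ℝ, 1 ≤ r →
      K - 2 * Λ / r ^ 3 - K / r ^ 2 ≤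
      (1 / 2) * Λ * (-((r ^ 4 + 3 * r ^ 2 + 2) / r) +
        Real.sqrt (((r ^ 4 + 3 * r ^ 2 + 2) / r) ^ 2 - 4)) + K * r ^ 2 / (1 + r ^ 2) := by
    intro r hr1
    have hr : (0:ℝ) < r := by linarith
    set f : ℝ := (r ^ 4 + 3 * r ^ 2 + 2) / r with hfd
    have hf2 : 2 ≤ f := aux_f_ge_two r hr
    have hf0 : (0:ℝ) < f := by linarith
    have hsl := aux_sqrt_lower f hf2
    have hr3 : (0:ℝ) < r ^ 3 := by positivity
    have hfge : r ^ 3 ≤ f := by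
      rw [hfd, le_div_iff₀ hr]
      nlinarith
    have ht1 : -(2 * Λ / r ^ 3) ≤ (1 / 2) * Λ * (-f + Real.sqrt (f ^ 2 - 4)) := by
      have h1 : -(4 / f) ≤ -f + Real.sqrt (f ^ 2 - 4) := by linarith
      have h2 : 4 / f ≤ 4 / r ^ 3 := div_le_div_of_nonneg_left (by norm_num) hr3 hfge
      calc -(2 * Λ / r ^ 3) = (1 / 2) * Λ * (-(4 / r ^ 3)) := by ring
        _ ≤ (1 / 2) * Λ * (-(4 / f)) := by
            apply mul_le_mul_of_nonneg_left (by linarith) (by positivity)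
        _ ≤ (1 / 2) * Λ * (-f + Real.sqrt (f ^ 2 - 4)) := by
            apply mul_le_mul_of_nonneg_left h1 (by positivity)
    have ht2 : K - K / r ^ 2 ≤ K * r ^ 2 / (1 + r ^ 2) := by
      have heq : K - K / r ^ 2 = (K * r ^ 2 - K) / r ^ 2 := by field_simp
      rw [heq, div_le_div_iff₀ (by positivity) (by positivity)]
      nlinarith
    linarith
  -- tendsto
  have htend : Tendsto (fun r : ℝ => (1 / 2) * Λ *
      (-((r ^ 4 + 3 * r ^ 2 + 2) / r) +
        Real.sqrt (((r ^ 4 + 3 * r ^ 2 + 2) / r) ^ 2 - 4)) + K * r ^ 2 / (1 + r ^ 2))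
      atTop (nhds K) := by
    have h1 : Tendsto (fun r : ℝ => 2 * Λ / r ^ 3) atTop (nhds 0) :=
      tendsto_const_nhds.div_atTop (tendsto_pow_atTop (by norm_num))
    have h2 : Tendsto (fun r : ℝ => K / r ^ 2) atTop (nhds 0) :=
      tendsto_const_nhds.div_atTop (tendsto_pow_atTop (by norm_num))
    have hlo : Tendsto (fun r : ℝ => K - 2 * Λ / r ^ 3 - K / r ^ 2) atTop (nhds K) := by
      have := ((tendsto_const_nhds (x := K) (f := atTop)).sub h1).sub h2
      simpa using this
    exact tendsto_of_tendsto_of_tendsto_of_le_of_le' hlo tendsto_const_nhds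
      (eventually_atTop.2 ⟨1, hlb⟩) (eventually_atTop.2 ⟨1, hub⟩)
  refine ⟨?_, ⟨min 1 (Λ / (6 * K)), hεpos, hneg⟩, htend⟩
  -- root via IVT
  obtain ⟨b, hb1, hbpos⟩ : ∃ b : ℝ, 1 ≤ b ∧ 0 <
      (1 / 2) * Λ * (-((b ^ 4 + 3 * b ^ 2 + 2) / b) +
        Real.sqrt (((b ^ 4 + 3 * b ^ 2 + 2) / b) ^ 2 - 4)) + K * b ^ 2 / (1 + b ^ 2) := by
    have hev := (htend.eventually (eventually_gt_nhds hK)).and (eventually_ge_atTop (1:ℝ))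
    obtain ⟨b, hb⟩ := hev.exists
    exact ⟨b, hb.2, hb.1⟩
  set a : ℝ := min (min 1 (Λ / (6 * K)) / 2) b with ha
  have ha0 : 0 < a := lt_min (by positivity) (by linarith)
  have hab : a ≤ b := min_le_right _ _
  have haneg : (1 / 2) * Λ * (-((a ^ 4 + 3 * a ^ 2 + 2) / a) +
      Real.sqrt (((a ^ 4 + 3 * a ^ 2 + 2) / a) ^ 2 - 4)) + K * a ^ 2 / (1 + a ^ 2) < 0 := by
    apply hneg a ha0
    calc a ≤ min 1 (Λ / (6 * K)) / 2 := min_le_left _ _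
      _ < min 1 (Λ / (6 * K)) := by linarith
  have hcont : ContinuousOn (fun r : ℝ => (1 / 2) * Λ *
      (-((r ^ 4 + 3 * r ^ 2 + 2) / r) +
        Real.sqrt (((r ^ 4 + 3 * r ^ 2 + 2) / r) ^ 2 - 4)) + K * r ^ 2 / (1 + r ^ 2))
      (Set.Icc a b) := by
    have hsub : Set.Icc a b ⊆ {r : ℝ | r ≠ 0} := by
      intro x hx
      have : 0 < x := lt_of_lt_of_le ha0 hx.1
      exact ne_of_gt this
    apply ContinuousOn.add
    · apply ContinuousOn.mul continuousOn_const
      apply ContinuousOn.add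
      · apply ContinuousOn.neg
        exact ContinuousOn.mono (ContinuousOn.div (by fun_prop) continuousOn_id
          (fun x hx => hx)) hsub
      · apply Real.continuous_sqrt.comp_continuousOn
        apply ContinuousOn.sub _ continuousOn_const
        apply ContinuousOn.pow
        exact ContinuousOn.mono (ContinuousOn.div (by fun_prop) continuousOn_id
          (fun x hx => hx)) hsub
    · apply ContinuousOn.div (by fun_prop) (by fun_prop)
      intro x _
      positivity
  have hmem : (0:ℝ) ∈ Set.Icc ((1 / 2) * Λ * (-((a ^ 4 + 3 * a ^ 2 + 2) / a) +
      Real.sqrt (((a ^ 4 + 3 * a ^ 2 + 2) / a) ^ 2 - 4)) + K * a ^ 2 / (1 + a ^ 2))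
      ((1 / 2) * Λ * (-((b ^ 4 + 3 * b ^ 2 + 2) / b) +
      Real.sqrt (((b ^ 4 + 3 * b ^ 2 + 2) / b) ^ 2 - 4)) + K * b ^ 2 / (1 + b ^ 2)) :=
    ⟨le_of_lt haneg, le_of_lt hbpos⟩
  obtain ⟨c, hc, hc0⟩ := intermediate_value_Icc hab hcont hmem
  exact ⟨c, lt_of_lt_of_le ha0 hc.1, hc0⟩
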